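/- For n ≥ 1 and all x ≥ 0, the ratio of successive iterated complementary error functions satisfies 1/(x + sqrt(2(n+1) + x²)) < iⁿerfc(x)/iⁿ⁻¹erfc(x) < 1/(x + sqrt(2n + x²)). -/

import Mathlib

open MeasureTheory Set Filter Topology

/-- The iterated complementary error functions:
`i⁰erfc = erfc`, `iⁿerfc(x) = ∫_x^∞ iⁿ⁻¹erfc(t) dt`. -/
noncomputable def itErfc : ℕ → ℝ → ℝ
  | 0, x => (2 / Real.sqrt Real.pi) * ∫ t in Set.Ioi x, Real.exp (-t ^ 2)
  | n + 1, x => ∫ t in Set.Ioi x, itErfc n t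

namespace AuxItErfc

/-- gaussian moment integrand -/
noncomputable def g (k : ℕ) (t : ℝ) : ℝ := t ^ k * Real.exp (-t ^ 2)

lemma integrable_g (k : ℕ) : Integrable (g k) := by
  have h := integrable_rpow_mul_exp_neg_mul_sq (b := 1) one_pos (s := (k : ℝ))
    (by have : (0:ℝ) ≤ k := Nat.cast_nonneg k; linarith)
  simp only [Real.rpow_natCast, neg_mul, one_mul] at h
  exact h

noncomputable def II (m : ℕ) (x : ℝ) : ℝ :=
  ∫ t in Set.Ioi x, (t - x) ^ m * Real.exp (-t ^ 2)

lemma shift_eq (m : ℕ) (x : ℝ) : ∀ t : ℝ, (t - x) ^ m * Real.exp (-t ^ 2)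
    = ∑ k ∈ Finset.range (m+1), ((m.choose k : ℝ) * (-x) ^ (m - k)) * g k t := by
  intro t
  rw [sub_eq_add_neg, add_pow, Finset.sum_mul]
  refine Finset.sum_congr rfl fun k hk => ?_
  simp only [g]; ring

lemma integrable_shift (m : ℕ) (x : ℝ) :
    Integrable (fun t : ℝ => (t - x) ^ m * Real.exp (-t ^ 2)) := by
  have h : (fun t : ℝ => (t - x) ^ m * Real.exp (-t ^ 2))
      = fun t => ∑ k ∈ Finset.range (m+1), ((m.choose k : ℝ) * (-x) ^ (m-k)) * g k t :=
    funext (shift_eq m x)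
  rw [h]
  exact integrable_finset_sum _ fun k _ => (integrable_g k).const_mul _

lemma II_pos (m : ℕ) (x : ℝ) : 0 < II m x := by
  rw [II]
  refine (setIntegral_pos_iff_support_of_nonneg_ae ?_ (integrable_shift m x).integrableOn).2 ?_
  · filter_upwards [ae_restrict_mem measurableSet_Ioi] with t ht
    exact mul_nonneg (pow_nonneg (sub_nonneg.2 (le_of_lt ht)) m) (Real.exp_pos _).le
  · have hsub : Set.Ioi x ⊆ Function.support fun t => (t - x) ^ m * Real.exp (-t ^ 2) := by
      intro t ht
      exact ne_of_gt (mul_pos (pow_pos (sub_pos.2 ht) m) (Real.exp_pos _))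
    rw [Set.inter_eq_self_of_subset_right hsub, Real.volume_Ioi]
    simp

lemma A_eq (k : ℕ) (y : ℝ) :
    (∫ t in Set.Ioi y, g k t) = (∫ t : ℝ, g k t) -
      ((∫ t in Set.Iic (0:ℝ), g k t) + ∫ t in (0:ℝ)..y, g k t) := by
  have h1 := intervalIntegral.integral_Iic_add_Ioi (b := y)
    (integrable_g k).integrableOn (integrable_g k).integrableOn
  have h2 := intervalIntegral.integral_Iic_sub_Iic (μ := volume) (f := g k) (a := (0:ℝ)) (b := y)
    (integrable_g k).integrableOn (integrable_g k).integrableOn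
  linarith

lemma continuous_g (k : ℕ) : Continuous (g k) := by
  unfold g; fun_prop

lemma hasDerivAt_A (k : ℕ) (y : ℝ) :
    HasDerivAt (fun z => ∫ t in Set.Ioi z, g k t) (-g k y) y := by
  have hd : HasDerivAt (fun z => ∫ t in (0:ℝ)..z, g k t) (g k y) y :=
    intervalIntegral.integral_hasDerivAt_right ((integrable_g k).intervalIntegrable)
      ((continuous_g k).stronglyMeasurable.stronglyMeasurableAtFilter)
      (continuous_g k).continuousAt
  have h2 := ((hd.const_add (∫ t in Set.Iic (0:ℝ), g k t)).const_sub (∫ t : ℝ, g k t))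
  have hfun : (fun z => ∫ t in Set.Ioi z, g k t) = fun z => (∫ t : ℝ, g k t) -
      ((∫ t in Set.Iic (0:ℝ), g k t) + ∫ t in (0:ℝ)..z, g k t) := funext (A_eq k)
  rw [hfun]
  exact h2

lemma tendsto_A (k : ℕ) : Tendsto (fun y => ∫ t in Set.Ioi y, g k t) atTop (𝓝 0) := by
  have h1 : Tendsto (fun y => ∫ t in (0:ℝ)..y, g k t) atTop
      (𝓝 (∫ t in Set.Ioi (0:ℝ), g k t)) :=
    intervalIntegral_tendsto_integral_Ioi 0 (integrable_g k).integrableOn tendsto_id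
  have h3 := intervalIntegral.integral_Iic_add_Ioi (b := (0:ℝ))
    (integrable_g k).integrableOn (integrable_g k).integrableOn
  have h4 := (tendsto_const_nhds (x := (∫ t : ℝ, g k t)) (f := atTop)).sub
    ((tendsto_const_nhds (x := (∫ t in Set.Iic (0:ℝ), g k t)) (f := atTop)).add h1)
  have hfun : (fun y => ∫ t in Set.Ioi y, g k t) = fun z => (∫ t : ℝ, g k t) -
      ((∫ t in Set.Iic (0:ℝ), g k t) + ∫ t in (0:ℝ)..z, g k t) := funext (A_eq k)
  rw [hfun]
  convert h4 using 2
  linarith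

lemma II_eq_sum (m : ℕ) (x : ℝ) :
    II m x = ∑ k ∈ Finset.range (m+1),
      ((m.choose k : ℝ) * (-x) ^ (m - k)) * ∫ t in Set.Ioi x, g k t := by
  rw [II]
  rw [MeasureTheory.setIntegral_congr_fun measurableSet_Ioi
    (fun t _ => shift_eq m x t)]
  rw [MeasureTheory.integral_finset_sum _
    (fun k _ => ((integrable_g k).const_mul _).integrableOn)]
  exact Finset.sum_congr rfl fun k _ => MeasureTheory.integral_const_mul _ _

lemma continuous_II (m : ℕ) : Continuous (fun x => II m x) := by
  have h : (fun x => II m x) = fun x => ∑ k ∈ Finset.range (m+1),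
      ((m.choose k : ℝ) * (-x) ^ (m-k)) * ∫ t in Set.Ioi x, g k t := funext (II_eq_sum m)
  rw [h]
  refine continuous_finset_sum _ fun k _ => Continuous.mul (by fun_prop) ?_
  exact continuous_iff_continuousAt.2 fun y => (hasDerivAt_A k y).continuousAt


lemma choose_nat_id (m k : ℕ) (hk : k ≤ m) :
    (m+1).choose k * (m+1-k) = (m+1) * m.choose k := by
  have h1 := Nat.add_one_mul_choose_eq m (m-k)
  rw [Nat.choose_symm hk] at h1
  have h2 : m - k + 1 = (m+1) - k := by omega
  rw [h2] at h1
  rw [Nat.choose_symm (by omega : k ≤ m+1)] at h1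
  omega

lemma hasDerivAt_II (m : ℕ) (y : ℝ) :
    HasDerivAt (fun z => II (m+1) z) (-(((m:ℝ)+1) * II m y)) y := by
  have hterm : ∀ k ∈ Finset.range (m+2), HasDerivAt
      (fun z => (((m+1).choose k : ℝ) * (-z) ^ (m+1-k)) * ∫ t in Set.Ioi z, g k t)
      ((((m+1).choose k : ℝ) * (((m+1-k : ℕ):ℝ) * (-y) ^ (m+1-k-1) * (-1)))
          * (∫ t in Set.Ioi y, g k t)
        + (((m+1).choose k : ℝ) * (-y) ^ (m+1-k)) * (-g k y)) y := by
    intro k _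
    exact (((hasDerivAt_neg y).pow _).const_mul _).mul (hasDerivAt_A k y)
  have hsum := HasDerivAt.fun_sum hterm
  have hfun : (fun z => II (m+1) z) = fun z => ∑ k ∈ Finset.range (m+2),
      (((m+1).choose k : ℝ) * (-z) ^ (m+1-k)) * ∫ t in Set.Ioi z, g k t :=
    funext (II_eq_sum (m+1))
  rw [hfun]
  refine hsum.congr_deriv ?_
  rw [Finset.sum_add_distrib]
  have hS2 : ∑ k ∈ Finset.range (m+2),
      (((m+1).choose k : ℝ) * (-y) ^ (m+1-k)) * (-g k y) = 0 := by
    have h0 : ∑ k ∈ Finset.range (m+2), y^k * (-y)^(m+1-k) * ((m+1).choose k : ℝ) = 0 := by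
      rw [← add_pow]; simp
    calc ∑ k ∈ Finset.range (m+2), (((m+1).choose k : ℝ) * (-y) ^ (m+1-k)) * (-g k y)
        = -Real.exp (-y^2) * ∑ k ∈ Finset.range (m+2),
            y^k * (-y)^(m+1-k) * ((m+1).choose k:ℝ) := by
          rw [Finset.mul_sum]
          exact Finset.sum_congr rfl fun k _ => by simp only [g]; ring
      _ = 0 := by rw [h0, mul_zero]
  have hS1 : ∑ k ∈ Finset.range (m+2),
      ((((m+1).choose k : ℝ) * (((m+1-k : ℕ):ℝ) * (-y) ^ (m+1-k-1) * (-1)))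
        * (∫ t in Set.Ioi y, g k t))
      = -(((m:ℝ)+1) * II m y) := by
    rw [Finset.sum_range_succ]
    have hlast : ((((m+1).choose (m+1) : ℝ)) * ((((m+1-(m+1)) : ℕ):ℝ)
        * (-y) ^ (m+1-(m+1)-1) * (-1))) * (∫ t in Set.Ioi (y:ℝ), g (m+1) t) = 0 := by
      simp
    rw [hlast, add_zero]
    calc ∑ k ∈ Finset.range (m+1),
        ((((m+1).choose k : ℝ) * (((m+1-k : ℕ):ℝ) * (-y) ^ (m+1-k-1) * (-1)))
          * (∫ t in Set.Ioi y, g k t))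
        = ∑ k ∈ Finset.range (m+1),
            -(((m:ℝ)+1) * (((m.choose k : ℝ) * (-y) ^ (m-k)) * ∫ t in Set.Ioi y, g k t)) := by
          refine Finset.sum_congr rfl fun k hk => ?_
          have hk' : k ≤ m := Nat.lt_succ_iff.mp (Finset.mem_range.mp hk)
          have hc' : (((m+1).choose k : ℝ)) * (((m+1-k:ℕ)):ℝ) = ((m:ℝ)+1) * (m.choose k : ℝ) := by
            exact_mod_cast congrArg (Nat.cast (R := ℝ)) (choose_nat_id m k hk')
          have he : m+1-k-1 = m-k := by omega
          rw [he]
          linear_combination (-((-y)^(m-k) * (∫ t in Set.Ioi y, g k t))) * hc'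
      _ = -(((m:ℝ)+1) * II m y) := by
          rw [II_eq_sum m y, Finset.mul_sum, Finset.sum_neg_distrib]
  rw [hS1, hS2, add_zero]


lemma tendsto_shift (j : ℕ) (x : ℝ) :
    Tendsto (fun t : ℝ => (t - x)^j * Real.exp (-t^2)) atTop (𝓝 0) := by
  have h := Real.tendsto_pow_mul_exp_neg_atTop_nhds_zero j
  have h2 : Tendsto (fun t:ℝ => (2:ℝ)^j * (t^j * Real.exp (-t))) atTop (𝓝 ((2:ℝ)^j * 0)) :=
    h.const_mul _
  rw [mul_zero] at h2
  apply squeeze_zero' ?_ ?_ h2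
  · filter_upwards [eventually_ge_atTop x] with t ht
    exact mul_nonneg (pow_nonneg (sub_nonneg.2 ht) j) (Real.exp_pos _).le
  · filter_upwards [eventually_ge_atTop (max 1 |x|)] with t ht
    have ht1 : (1:ℝ) ≤ t := le_trans (le_max_left _ _) ht
    have htx : |x| ≤ t := le_trans (le_max_right _ _) ht
    have hxt : -t ≤ x ∧ x ≤ t := abs_le.mp htx
    calc (t-x)^j * Real.exp (-t^2) ≤ (2*t)^j * Real.exp (-t) := by
          refine mul_le_mul (pow_le_pow_left₀ (by linarith) (by linarith) j)
            (Real.exp_le_exp.2 (by nlinarith)) (Real.exp_pos _).le (by positivity)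
      _ = (2:ℝ)^j * (t^j * Real.exp (-t)) := by ring

/-- absolute gaussian-type integrand with decay rate 1/2 -/
noncomputable def g2 (k : ℕ) (t : ℝ) : ℝ := |t| ^ k * Real.exp (-((1:ℝ)/2) * t ^ 2)

lemma integrable_g2 (k : ℕ) : Integrable (g2 k) := by
  have h := (integrable_rpow_mul_exp_neg_mul_sq (b := (1:ℝ)/2) (by norm_num) (s := (k : ℝ))
    (by have : (0:ℝ) ≤ k := Nat.cast_nonneg k; linarith)).abs
  apply h.congr
  filter_upwards with t
  rw [Real.rpow_natCast, abs_mul, abs_of_nonneg (Real.exp_pos _).le, abs_pow]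
  rfl

lemma II_le (n : ℕ) (t : ℝ) (ht : 0 ≤ t) :
    II n t ≤ Real.exp (-((1:ℝ)/2) * t^2) * ∫ s : ℝ, g2 n s := by
  have h1 : II n t ≤ ∫ s in Set.Ioi t, Real.exp (-((1:ℝ)/2) * t^2) * g2 n s := by
    rw [II]
    refine setIntegral_mono_on (integrable_shift n t).integrableOn
      (((integrable_g2 n).const_mul _).integrableOn) measurableSet_Ioi (fun s hs => ?_)
    have hst : t < s := hs
    have h2 : (s - t)^n ≤ |s|^n := by
      refine pow_le_pow_left₀ (by linarith) ?_ n
      rw [abs_of_nonneg (by linarith)]; linarith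
    have h3 : Real.exp (-s^2) ≤ Real.exp (-((1:ℝ)/2) * t^2) * Real.exp (-((1:ℝ)/2) * s^2) := by
      rw [← Real.exp_add]
      apply Real.exp_le_exp.2
      nlinarith
    calc (s - t)^n * Real.exp (-s^2)
        ≤ |s|^n * (Real.exp (-((1:ℝ)/2) * t^2) * Real.exp (-((1:ℝ)/2) * s^2)) := by
          refine mul_le_mul h2 h3 (Real.exp_pos _).le (by positivity)
      _ = Real.exp (-((1:ℝ)/2) * t^2) * g2 n s := by rw [g2]; ring
  refine h1.trans ?_
  rw [MeasureTheory.integral_const_mul]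
  refine mul_le_mul_of_nonneg_left ?_ (Real.exp_pos _).le
  refine setIntegral_le_integral (integrable_g2 n) ?_
  filter_upwards with s
  exact mul_nonneg (pow_nonneg (abs_nonneg _) _) (Real.exp_pos _).le

lemma integrableOn_II (n : ℕ) (x : ℝ) (hx : 0 ≤ x) :
    IntegrableOn (fun t => II n t) (Set.Ioi x) := by
  refine Integrable.mono' (g := fun t => (∫ s : ℝ, g2 n s) * Real.exp (-((1:ℝ)/2) * t^2)) ?_ ?_ ?_
  · exact ((integrable_exp_neg_mul_sq (by norm_num : (0:ℝ) < 1/2)).const_mul _).integrableOn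
  · exact (continuous_II n).aestronglyMeasurable.restrict
  · filter_upwards [ae_restrict_mem measurableSet_Ioi] with t ht
    rw [Real.norm_eq_abs, abs_of_pos (II_pos n t)]
    have := II_le n t (le_trans hx (le_of_lt ht))
    linarith [this]

lemma tendsto_exp_half : Tendsto (fun y : ℝ => Real.exp (-((1:ℝ)/2) * y^2)) atTop (𝓝 0) := by
  have h1 : Tendsto (fun y:ℝ => ((1:ℝ)/2)*y^2) atTop atTop :=
    (tendsto_pow_atTop (two_ne_zero)).const_mul_atTop (by norm_num)
  have h2 : Tendsto (fun y:ℝ => -(((1:ℝ)/2)*y^2)) atTop atBot := tendsto_neg_atBot_iff.2 h1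
  have h3 := Real.tendsto_exp_atBot.comp h2
  exact h3.congr fun y => by rw [Function.comp_apply, neg_mul]

lemma tendsto_II (n : ℕ) : Tendsto (fun y => II n y) atTop (𝓝 0) := by
  have hg : Tendsto (fun y : ℝ => Real.exp (-((1:ℝ)/2) * y^2) * ∫ s : ℝ, g2 n s) atTop (𝓝 0) := by
    simpa using tendsto_exp_half.mul_const (∫ s : ℝ, g2 n s)
  apply squeeze_zero' ?_ ?_ hg
  · filter_upwards with y; exact (II_pos n y).le
  · filter_upwards [eventually_ge_atTop (0:ℝ)] with y hy
    exact II_le n y hy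


lemma II_rec (m : ℕ) (x : ℝ) :
    ((m:ℝ) + 1) * II m x = 2 * II (m+2) x + 2 * x * II (m+1) x := by
  set D : ℝ → ℝ := fun t => ((m:ℝ)+1) * ((t-x)^m * Real.exp (-t^2))
    - 2*((t-x)^(m+2) * Real.exp (-t^2)) - (2*x)*((t-x)^(m+1) * Real.exp (-t^2)) with hD
  have hderiv : ∀ t ∈ Set.Ici x, HasDerivAt (fun t => (t - x)^(m+1) * Real.exp (-t^2)) (D t) t := by
    intro t _
    have h1 : HasDerivAt (fun t : ℝ => (t - x)^(m+1)) ((((m:ℝ))+1) * (t-x)^m) t := by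
      have h := ((hasDerivAt_id t).sub_const x).fun_pow (m+1)
      simpa using h
    have h2 : HasDerivAt (fun t : ℝ => Real.exp (-t^2)) (Real.exp (-t^2) * (-(2*t))) t := by
      have ht : HasDerivAt (fun t : ℝ => -t^2) (-(2*t)) t := by
        simpa using (hasDerivAt_pow 2 t).fun_neg
      exact ht.exp
    have h3 := h1.mul h2
    refine h3.congr_deriv ?_
    simp only [hD]; ring
  have hint : IntegrableOn D (Set.Ioi x) :=
    ((((integrable_shift m x).const_mul _).sub ((integrable_shift (m+2) x).const_mul 2)).sub
      ((integrable_shift (m+1) x).const_mul (2*x))).integrableOn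
  have htend := tendsto_shift (m+1) x
  have hE := MeasureTheory.integral_Ioi_of_hasDerivAt_of_tendsto' hderiv hint htend
  have hfx : (x - x)^(m+1) * Real.exp (-x^2) = 0 := by simp
  rw [hfx, sub_zero] at hE
  have hfm := ((integrable_shift m x).const_mul ((m:ℝ)+1)).integrableOn (s := Set.Ioi x)
  have hfm2 := ((integrable_shift (m+2) x).const_mul 2).integrableOn (s := Set.Ioi x)
  have hfm1 := ((integrable_shift (m+1) x).const_mul (2*x)).integrableOn (s := Set.Ioi x)
  have eA : ∫ t in Set.Ioi x, ((m:ℝ)+1) * ((t-x)^m * Real.exp (-t^2))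
      = ((m:ℝ)+1) * II m x := MeasureTheory.integral_const_mul _ _
  have eB : ∫ t in Set.Ioi x, (2:ℝ) * ((t-x)^(m+2) * Real.exp (-t^2))
      = 2 * II (m+2) x := MeasureTheory.integral_const_mul _ _
  have eC : ∫ t in Set.Ioi x, (2*x) * ((t-x)^(m+1) * Real.exp (-t^2))
      = (2*x) * II (m+1) x := MeasureTheory.integral_const_mul _ _
  have hsplit : ∫ t in Set.Ioi x, D t
      = ((m:ℝ)+1) * II m x - 2 * II (m+2) x - (2*x) * II (m+1) x := by
    calc ∫ t in Set.Ioi x, D t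
        = (∫ t in Set.Ioi x, (((m:ℝ)+1) * ((t-x)^m * Real.exp (-t^2))
            - 2*((t-x)^(m+2) * Real.exp (-t^2))))
          - ∫ t in Set.Ioi x, (2*x)*((t-x)^(m+1)*Real.exp (-t^2)) :=
          MeasureTheory.integral_sub (hfm.sub hfm2) hfm1
      _ = ((∫ t in Set.Ioi x, ((m:ℝ)+1) * ((t-x)^m * Real.exp (-t^2)))
            - ∫ t in Set.Ioi x, 2*((t-x)^(m+2) * Real.exp (-t^2)))
          - ∫ t in Set.Ioi x, (2*x)*((t-x)^(m+1)*Real.exp (-t^2)) := by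
          rw [MeasureTheory.integral_sub hfm hfm2]
      _ = ((m:ℝ)+1) * II m x - 2 * II (m+2) x - (2*x) * II (m+1) x := by
          rw [eA, eB, eC]
  rw [hsplit] at hE
  linarith

lemma II_cs (m : ℕ) (x : ℝ) : II (m+1) x ^ 2 ≤ II m x * II (m+2) x := by
  have h1 := II_pos m x
  have h2 := II_pos (m+1) x
  set lam : ℝ := II (m+1) x / II m x with hlam
  have hnn : 0 ≤ ∫ t in Set.Ioi x, ((t-x)^(m+2) * Real.exp (-t^2)
      - (2*lam) * ((t-x)^(m+1) * Real.exp (-t^2)) + lam^2 * ((t-x)^m * Real.exp (-t^2))) := by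
    refine setIntegral_nonneg measurableSet_Ioi (fun t ht => ?_)
    have h4 : (0:ℝ) ≤ (t-x)^m * (t - x - lam)^2 * Real.exp (-t^2) := by
      have : (0:ℝ) ≤ (t-x)^m := pow_nonneg (sub_nonneg.2 (le_of_lt ht)) m
      positivity
    calc (0:ℝ) ≤ (t-x)^m * (t - x - lam)^2 * Real.exp (-t^2) := h4
      _ = (t-x)^(m+2) * Real.exp (-t^2) - (2*lam) * ((t-x)^(m+1) * Real.exp (-t^2))
          + lam^2 * ((t-x)^m * Real.exp (-t^2)) := by ring
  have hexp : ∫ t in Set.Ioi x, ((t-x)^(m+2) * Real.exp (-t^2)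
      - (2*lam) * ((t-x)^(m+1) * Real.exp (-t^2)) + lam^2 * ((t-x)^m * Real.exp (-t^2)))
      = II (m+2) x - (2*lam) * II (m+1) x + lam^2 * II m x := by
    have ha := (integrable_shift (m+2) x).integrableOn (s := Set.Ioi x)
    have hb := ((integrable_shift (m+1) x).const_mul (2*lam)).integrableOn (s := Set.Ioi x)
    have hc := ((integrable_shift m x).const_mul (lam^2)).integrableOn (s := Set.Ioi x)
    have eB : ∫ t in Set.Ioi x, (2*lam) * ((t-x)^(m+1) * Real.exp (-t^2))
        = (2*lam) * II (m+1) x := MeasureTheory.integral_const_mul _ _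
    have eC : ∫ t in Set.Ioi x, lam^2 * ((t-x)^m * Real.exp (-t^2))
        = lam^2 * II m x := MeasureTheory.integral_const_mul _ _
    calc ∫ t in Set.Ioi x, ((t-x)^(m+2) * Real.exp (-t^2)
          - (2*lam) * ((t-x)^(m+1) * Real.exp (-t^2)) + lam^2 * ((t-x)^m * Real.exp (-t^2)))
        = (∫ t in Set.Ioi x, ((t-x)^(m+2) * Real.exp (-t^2)
            - (2*lam) * ((t-x)^(m+1) * Real.exp (-t^2))))
          + ∫ t in Set.Ioi x, lam^2 * ((t-x)^m * Real.exp (-t^2)) :=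
          MeasureTheory.integral_add (ha.sub hb) hc
      _ = ((∫ t in Set.Ioi x, (t-x)^(m+2) * Real.exp (-t^2))
            - ∫ t in Set.Ioi x, (2*lam) * ((t-x)^(m+1) * Real.exp (-t^2)))
          + ∫ t in Set.Ioi x, lam^2 * ((t-x)^m * Real.exp (-t^2)) := by
          rw [MeasureTheory.integral_sub ha hb]
      _ = II (m+2) x - (2*lam) * II (m+1) x + lam^2 * II m x := by
          rw [eB, eC]; rfl
  rw [hexp] at hnn
  have hcancel : lam * II m x = II (m+1) x := div_mul_cancel₀ _ (ne_of_gt h1)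
  nlinarith [hnn, hcancel, h1, h2]


lemma key_int (n : ℕ) (x : ℝ) (hx : 0 ≤ x) :
    ∫ t in Set.Ioi x, II n t = II (n+1) x / ((n:ℝ)+1) := by
  have hderiv : ∀ y ∈ Set.Ici x, HasDerivAt (fun z => -(II (n+1) z) / ((n:ℝ)+1)) (II n y) y := by
    intro y _
    have h := ((hasDerivAt_II n y).fun_neg).div_const ((n:ℝ)+1)
    refine h.congr_deriv ?_
    have hne : ((n:ℝ)+1) ≠ 0 := by positivity
    field_simp
  have hint := integrableOn_II n x hx
  have htend : Tendsto (fun z => -(II (n+1) z) / ((n:ℝ)+1)) atTop (𝓝 0) := by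
    have h := ((tendsto_II (n+1)).neg).div_const ((n:ℝ)+1)
    simpa using h
  have hE := MeasureTheory.integral_Ioi_of_hasDerivAt_of_tendsto' hderiv hint htend
  rw [hE]; ring

lemma itErfc_eq : ∀ (n : ℕ) (x : ℝ), 0 ≤ x →
    itErfc n x = (2 / Real.sqrt Real.pi) * (II n x / (n.factorial : ℝ)) := by
  intro n
  induction n with
  | zero =>
    intro x hx
    simp [itErfc, II]
  | succ n ih =>
    intro x hx
    have hfac : ((n.factorial : ℝ)) ≠ 0 := by
      exact_mod_cast Nat.factorial_ne_zero n
    have hcong : ∫ t in Set.Ioi x, itErfc n t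
        = ∫ t in Set.Ioi x, (2 / Real.sqrt Real.pi / (n.factorial : ℝ)) * II n t := by
      refine MeasureTheory.setIntegral_congr_fun measurableSet_Ioi (fun t ht => ?_)
      rw [ih t (le_trans hx (le_of_lt ht))]; ring
    calc itErfc (n+1) x = ∫ t in Set.Ioi x, itErfc n t := rfl
      _ = (2 / Real.sqrt Real.pi / (n.factorial : ℝ)) * ∫ t in Set.Ioi x, II n t := by
          rw [hcong, MeasureTheory.integral_const_mul]
      _ = (2 / Real.sqrt Real.pi / (n.factorial : ℝ)) * (II (n+1) x / ((n:ℝ)+1)) := by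
          rw [key_int n x hx]
      _ = (2 / Real.sqrt Real.pi) * (II (n+1) x / ((n+1).factorial : ℝ)) := by
          rw [Nat.factorial_succ]
          push_cast
          rw [div_mul_div_comm, ← mul_div_assoc, mul_comm ((n:ℝ)+1) ((n.factorial:ℝ))]


lemma upper_aux (x : ℝ) (hx : 0 ≤ x) (k : ℕ) (s : ℝ) (hs0 : 0 ≤ s)
    (hs2 : s^2 = 2*(k:ℝ)+2+x^2) :
    II (k+1) x * (x + s) ≤ ((k:ℝ)+1) * II k x := by
  have hrec := II_rec k x
  have hcs := II_cs k x
  have h1 := II_pos k x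
  have h2 := II_pos (k+1) x
  have h3 := II_pos (k+2) x
  have hrec' : (((k:ℝ)+1) * II k x) * II k x
      = (2 * II (k+2) x + 2*x*II (k+1) x) * II k x := by rw [hrec]
  have hs2' : (s * II k x)^2 = (2*(k:ℝ)+2+x^2) * (II k x)^2 := by rw [mul_pow, hs2]
  have hsq : (2*II (k+1) x + x * II k x)^2 ≤ (s * II k x)^2 := by
    nlinarith [hrec', hcs, hs2']
  have habs : 2 * II (k+1) x + x * II k x ≤ s * II k x := by
    nlinarith [hsq, mul_nonneg hs0 h1.le, mul_nonneg hx h1.le, h2]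
  have hs2'' : s^2 * II k x = (2*(k:ℝ)+2+x^2) * II k x := by rw [hs2]
  nlinarith [mul_nonneg (by linarith : (0:ℝ) ≤ s * II k x - x * II k x - 2*II (k+1) x)
    (by linarith : (0:ℝ) ≤ x + s), hs2'']

lemma lower_aux (x : ℝ) (hx : 0 ≤ x) (k : ℕ) (s : ℝ) (hs0 : 0 ≤ s)
    (hs2 : s^2 = 2*(k:ℝ)+4+x^2) :
    ((k:ℝ)+1) * II k x ≤ II (k+1) x * (x + s) := by
  have hk : (0:ℝ) ≤ k := Nat.cast_nonneg k
  have hup := upper_aux x hx (k+1) s hs0 (by push_cast; linarith)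
  push_cast at hup
  have hrec := II_rec k x
  have h2 := II_pos (k+1) x
  have hspos : 0 < s := by nlinarith [sq_nonneg x]
  have hxs : 0 < x + s := by linarith
  have hrec2 : (((k:ℝ)+1) * II k x) * (x+s)
      = (2 * II (k+2) x + 2*x*II (k+1) x) * (x+s) := by rw [hrec]
  have hs2I : s^2 * II (k+1) x = (2*(k:ℝ)+4+x^2) * II (k+1) x := by rw [hs2]
  have h5 : (((k:ℝ)+1) * II k x) * (x+s) ≤ (II (k+1) x * (x + s)) * (x+s) := by
    nlinarith [hrec2, hup, hs2I, h2, hx]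
  exact le_of_mul_le_mul_right h5 hxs

lemma upper_strict (x : ℝ) (hx : 0 ≤ x) (k : ℕ) (s : ℝ) (hs0 : 0 ≤ s)
    (hs2 : s^2 = 2*(k:ℝ)+2+x^2) :
    II (k+1) x * (x + s) < ((k:ℝ)+1) * II k x := by
  have hk : (0:ℝ) ≤ k := Nat.cast_nonneg k
  set s₂ := Real.sqrt (2*(k:ℝ)+6+x^2) with hs₂
  have hs₂0 : 0 ≤ s₂ := Real.sqrt_nonneg _
  have hs₂2 : s₂^2 = 2*(k:ℝ)+6+x^2 := Real.sq_sqrt (by positivity)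
  have hlo := lower_aux x hx (k+1) s₂ hs₂0 (by push_cast; linarith)
  push_cast at hlo
  have hrec := II_rec k x
  have h2 := II_pos (k+1) x
  have hz : s₂^2 = s^2 + 4 := by linarith
  have hss : s^2*s₂^2 = s^2*(s^2+4) := by rw [hz]
  have step1 : s * s₂ < s^2 + 2 := by
    nlinarith [hss, mul_nonneg hs0 hs₂0, sq_nonneg s]
  have hs_le : s ≤ s₂ := by nlinarith [hz, hs0, hs₂0]
  have hkey : (x+s)*(x+s₂) < 2*((k:ℝ)+2) + 2*x*(x+s₂) := by
    nlinarith [step1, hs_le, hx, hs₂2]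
  have hrec2 : (((k:ℝ)+1) * II k x) * (x+s₂)
      = (2 * II (k+2) x + 2*x*II (k+1) x) * (x+s₂) := by rw [hrec]
  have hs₂pos : 0 < s₂ := by nlinarith [sq_nonneg x]
  have hxs₂ : 0 < x + s₂ := by linarith
  have h5 : (II (k+1) x * (x+s)) * (x+s₂) < (((k:ℝ)+1) * II k x) * (x+s₂) := by
    nlinarith [hrec2, hlo, mul_lt_mul_of_pos_left hkey h2]
  exact lt_of_mul_lt_mul_right h5 hxs₂.le

lemma lower_strict (x : ℝ) (hx : 0 ≤ x) (k : ℕ) (s : ℝ) (hs0 : 0 ≤ s)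
    (hs2 : s^2 = 2*(k:ℝ)+4+x^2) :
    ((k:ℝ)+1) * II k x < II (k+1) x * (x + s) := by
  have hk : (0:ℝ) ≤ k := Nat.cast_nonneg k
  have hup := upper_strict x hx (k+1) s hs0 (by push_cast; linarith)
  push_cast at hup
  have hrec := II_rec k x
  have h2 := II_pos (k+1) x
  have hspos : 0 < s := by nlinarith [sq_nonneg x]
  have hxs : 0 < x + s := by linarith
  have hrec2 : (((k:ℝ)+1) * II k x) * (x+s)
      = (2 * II (k+2) x + 2*x*II (k+1) x) * (x+s) := by rw [hrec]
  have hs2I : s^2 * II (k+1) x = (2*(k:ℝ)+4+x^2) * II (k+1) x := by rw [hs2]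
  have h5 : (((k:ℝ)+1) * II k x) * (x+s) < (II (k+1) x * (x + s)) * (x+s) := by
    nlinarith [hrec2, hup, hs2I, h2, hx, hxs]
  exact lt_of_mul_lt_mul_right h5 hxs.le

end AuxItErfc

open AuxItErfc in
/-- For `n ≥ 1` and `x ≥ 0`,
`1/(x + √(2(n+1) + x²)) < iⁿerfc(x)/iⁿ⁻¹erfc(x) < 1/(x + √(2n + x²))`. -/
theorem itErfc_ratio_bounds (n : ℕ) (hn : 1 ≤ n) (x : ℝ) (hx : 0 ≤ x) :
    1 / (x + Real.sqrt (2 * ((n : ℝ) + 1) + x ^ 2)) <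
      itErfc n x / itErfc (n - 1) x ∧
    itErfc n x / itErfc (n - 1) x <
      1 / (x + Real.sqrt (2 * (n : ℝ) + x ^ 2)) := by
  obtain ⟨k, rfl⟩ : ∃ k, n = k + 1 := ⟨n - 1, (Nat.succ_pred_eq_of_pos hn).symm⟩
  simp only [Nat.add_sub_cancel]
  have hk : (0:ℝ) ≤ k := Nat.cast_nonneg k
  have h1 := II_pos k x
  have h2 := II_pos (k+1) x
  -- the ratio in terms of II
  have hπ : Real.sqrt Real.pi ≠ 0 := (Real.sqrt_pos.mpr Real.pi_pos).ne'
  have hfacne : ((k.factorial : ℝ)) ≠ 0 := by exact_mod_cast Nat.factorial_ne_zero k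
  have hkne : ((k:ℝ)+1) ≠ 0 := by positivity
  have hratio : itErfc (k+1) x / itErfc k x = II (k+1) x / (((k:ℝ)+1) * II k x) := by
    rw [itErfc_eq (k+1) x hx, itErfc_eq k x hx, Nat.factorial_succ]
    push_cast
    field_simp
  rw [hratio]
  have hden : 0 < ((k:ℝ)+1) * II k x := by positivity
  -- upper bound
  constructor
  · push_cast
    set s₁ := Real.sqrt (2 * (((k:ℝ)+1) + 1) + x ^ 2) with hs₁def
    have hs₁0 : 0 ≤ s₁ := Real.sqrt_nonneg _
    have hs₁2 : s₁^2 = 2*(k:ℝ)+4+x^2 := by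
      rw [hs₁def, Real.sq_sqrt (by positivity)]; ring
    have hlow := lower_strict x hx k s₁ hs₁0 hs₁2
    have hs₁pos : 0 < s₁ := by nlinarith [sq_nonneg x]
    have hxs₁ : 0 < x + s₁ := by linarith
    rw [div_lt_div_iff₀ hxs₁ hden]
    linarith [hlow]
  · push_cast
    set s₀ := Real.sqrt (2 * ((k:ℝ)+1) + x ^ 2) with hs₀def
    have hs₀0 : 0 ≤ s₀ := Real.sqrt_nonneg _
    have hs₀2 : s₀^2 = 2*(k:ℝ)+2+x^2 := by
      rw [hs₀def, Real.sq_sqrt (by positivity)]; ring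
    have hup := upper_strict x hx k s₀ hs₀0 hs₀2
    have hs₀pos : 0 < s₀ := by nlinarith [sq_nonneg x]
    have hxs₀ : 0 < x + s₀ := by linarith
    rw [div_lt_div_iff₀ hden hxs₀]
    linarith [hup]
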